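/- For all Z > 0, ε ∈ (0,1), 0 < k_min ≤ k_max and C > 0 there exists C₁ > 0, depending only on Z, ε, k_min, k_max and C, with the following property. Let k ∈ [k_min, k_max] and let q₁, r₁, q₂, r₂ : [0,Z] → ℝ be twice continuously differentiable with |q₁'(z)|, |r₁'(z)|, |q₂'(z)|, |r₂'(z)| ≤ C and |r₁''(z)| ≤ C for all z ∈ [0,Z]. Set h₁ = q₂ − q₁ and h₂ = r₂ − r₁. Then for every z ∈ [0,Z]: L₂(q₂,r₂)(z)² − L₂(q₁,r₁)(z)² − 2·L₂(q₁,r₁)(z)·L₂,lin(h₁,h₂)(z) ≥ (1/2)·h₂''(z)² − C₁·( h₁'(z)² + h₂'(z)² ), where the linearization L₂,lin is taken at the base point (q₁,r₁). -/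

import Mathlib

/-- The nonlinear operator `L₂(q,r)` of equation (3.21). -/
noncomputable def L2 (ε k : ℝ) (q r : ℝ → ℝ) (z : ℝ) : ℝ :=
  deriv (deriv r) z + (2 * k / ε) * deriv q z * (deriv q z - deriv r z)
    + (1 / ε ^ 2) * (deriv q z - deriv r z) ^ 2
    - 2 * Real.sqrt k * deriv q z
    - (deriv q z - deriv r z) / (ε * Real.sqrt k)

/-- The linearization of `L₂` at the base point `(q,r)`, applied to `(h₁,h₂)`. -/
noncomputable def L2lin (ε k : ℝ) (q r h₁ h₂ : ℝ → ℝ) (z : ℝ) : ℝ :=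
  deriv (deriv h₂) z
    + (2 * k / ε) * deriv h₁ z * (deriv q z - deriv r z)
    + (2 * k / ε) * deriv q z * (deriv h₁ z - deriv h₂ z)
    + (2 / ε ^ 2) * (deriv q z - deriv r z) * (deriv h₁ z - deriv h₂ z)
    - 2 * Real.sqrt k * deriv h₁ z
    - (deriv h₁ z - deriv h₂ z) / (ε * Real.sqrt k)


lemma absmul {a x Ma Mx : ℝ} (h1 : |a| ≤ Ma) (h2 : |x| ≤ Mx) : |a * x| ≤ Ma * Mx := by
  rw [abs_mul]
  exact mul_le_mul h1 h2 (abs_nonneg _) ((abs_nonneg _).trans h1)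

set_option maxHeartbeats 2000000 in
lemma aux_alg (ε k sk sm sM kmax C x1 y1 x2 y2 b1 b2 C₁ : ℝ)
    (hε0 : 0 < ε) (hk0 : 0 ≤ k) (hkM : k ≤ kmax) (hsk : 0 < sk) (hsm : 0 < sm)
    (hsmsk : sm ≤ sk) (hskM : sk ≤ sM) (hC : 0 < C)
    (hx1 : |x1| ≤ C) (hy1 : |y1| ≤ C) (hx2 : |x2| ≤ C) (hy2 : |y2| ≤ C) (hb1 : |b1| ≤ C)
    (hC₁def : C₁ = 4*(((2*kmax/ε)*(2*C) + (2*kmax/ε)*C + (2/ε^2)*(2*C) + 2*sM + 1/(ε*sm))^2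
        + ((2*kmax/ε)*C + (2/ε^2)*(2*C) + 1/(ε*sm))^2)
      + 16*C^2*((2*kmax/ε)*(3/2) + 2*(1/ε^2))^2
      + 2*(C + (2*kmax/ε)*(C*(2*C)) + (1/ε^2)*(2*C)^2 + 2*sM*C + (2*C)/(ε*sm))
          *((2*kmax/ε)*(3/2) + 2*(1/ε^2)) + 1) :
    (b2 + (2*k/ε)*x2*(x2 - y2) + (1/ε^2)*(x2 - y2)^2 - 2*sk*x2 - (x2 - y2)/(ε*sk))^2
      - (b1 + (2*k/ε)*x1*(x1 - y1) + (1/ε^2)*(x1 - y1)^2 - 2*sk*x1 - (x1 - y1)/(ε*sk))^2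
      - 2*(b1 + (2*k/ε)*x1*(x1 - y1) + (1/ε^2)*(x1 - y1)^2 - 2*sk*x1 - (x1 - y1)/(ε*sk))
        * ((b2 - b1) + (2*k/ε)*(x2 - x1)*(x1 - y1) + (2*k/ε)*x1*((x2 - x1) - (y2 - y1))
           + (2/ε^2)*(x1 - y1)*((x2 - x1) - (y2 - y1)) - 2*sk*(x2 - x1)
           - ((x2 - x1) - (y2 - y1))/(ε*sk))
    ≥ (1/2)*(b2 - b1)^2 - C₁*((x2 - x1)^2 + (y2 - y1)^2) := by
  have hkmax0 : 0 ≤ kmax := le_trans hk0 hkM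
  have hεsk : (0:ℝ) < ε * sk := mul_pos hε0 hsk
  have hεsm : (0:ℝ) < ε * sm := mul_pos hε0 hsm
  have hε2 : (0:ℝ) < ε^2 := pow_pos hε0 2
  -- abbreviations
  set u := x2 - x1 with hu
  set v := y2 - y1 with hv
  set d := b2 - b1 with hd
  set P := (2*k/ε)*(x1-y1) + (2*k/ε)*x1 + (2/ε^2)*(x1-y1) - 2*sk - 1/(ε*sk) with hPdef
  set R := -((2*k/ε)*x1) - (2/ε^2)*(x1-y1) + 1/(ε*sk) with hRdef
  set Q := (2*k/ε)*u*(u-v) + (1/ε^2)*(u-v)^2 with hQdef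
  set B := b1 + (2*k/ε)*x1*(x1 - y1) + (1/ε^2)*(x1 - y1)^2 - 2*sk*x1 - (x1 - y1)/(ε*sk) with hBdef
  set Mp := (2*kmax/ε)*(2*C) + (2*kmax/ε)*C + (2/ε^2)*(2*C) + 2*sM + 1/(ε*sm) with hMp
  set Mr := (2*kmax/ε)*C + (2/ε^2)*(2*C) + 1/(ε*sm) with hMr
  set Mb := C + (2*kmax/ε)*(C*(2*C)) + (1/ε^2)*(2*C)^2 + 2*sM*C + (2*C)/(ε*sm) with hMb
  set K2 := (2*kmax/ε)*(3/2) + 2*(1/ε^2) with hK2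
  clear_value u v d P R Q B Mp Mr Mb K2
  -- elementary bounds
  have hcoef0 : (0:ℝ) ≤ 2*k/ε := div_nonneg (by linarith) hε0.le
  have hcoefM : 2*k/ε ≤ 2*kmax/ε := by gcongr
  have hcoef : |2*k/ε| ≤ 2*kmax/ε := by rw [abs_of_nonneg hcoef0]; exact hcoefM
  have hi0 : (0:ℝ) ≤ 1/ε^2 := by positivity
  have hieq : |1/ε^2| = 1/ε^2 := abs_of_nonneg hi0
  have hieq2 : |2/ε^2| ≤ 2/ε^2 := le_of_eq (abs_of_nonneg (by positivity))
  have hdivpos : (0:ℝ) < 1/(ε*sk) := by positivity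
  have hdiv : |1/(ε*sk)| ≤ 1/(ε*sm) := by
    rw [abs_of_pos hdivpos]
    apply one_div_le_one_div_of_le hεsm
    exact mul_le_mul_of_nonneg_left hsmsk hε0.le
  have hskb : |2*sk| ≤ 2*sM := by
    rw [abs_of_pos (by linarith)]; linarith
  have huv1 : |x1 - y1| ≤ 2*C := by
    have h1 := abs_le.mp hx1; have h2 := abs_le.mp hy1
    exact abs_le.mpr ⟨by linarith, by linarith⟩
  -- bound on P
  have ht1 : |(2*k/ε)*(x1-y1)| ≤ (2*kmax/ε)*(2*C) := absmul hcoef huv1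
  have ht2 : |(2*k/ε)*x1| ≤ (2*kmax/ε)*C := absmul hcoef hx1
  have ht3 : |(2/ε^2)*(x1-y1)| ≤ (2/ε^2)*(2*C) := absmul hieq2 huv1
  have hPb : |P| ≤ Mp := by
    rw [hPdef, hMp]
    have a1 := abs_le.mp ht1; have a2 := abs_le.mp ht2; have a3 := abs_le.mp ht3
    have a4 := abs_le.mp hskb; have a5 := abs_le.mp hdiv
    exact abs_le.mpr ⟨by linarith, by linarith⟩
  have hRb : |R| ≤ Mr := by
    rw [hRdef, hMr]
    have a2 := abs_le.mp ht2; have a3 := abs_le.mp ht3; have a5 := abs_le.mp hdiv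
    exact abs_le.mpr ⟨by linarith, by linarith⟩
  -- bound on B
  have hBb : |B| ≤ Mb := by
    rw [hBdef, hMb]
    have a1 : |(2*k/ε)*x1*(x1-y1)| ≤ (2*kmax/ε)*(C*(2*C)) := by
      have := absmul hx1 huv1
      have h' : |(2*k/ε)*(x1*(x1-y1))| ≤ (2*kmax/ε)*(C*(2*C)) := absmul hcoef this
      rwa [← mul_assoc] at h'
    have a2 : |(1/ε^2)*(x1-y1)^2| ≤ (1/ε^2)*(2*C)^2 := by
      apply absmul (le_of_eq hieq)
      rw [abs_pow]
      exact pow_le_pow_left₀ (abs_nonneg _) huv1 2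
    have a3 : |2*sk*x1| ≤ 2*sM*C := by
      have := absmul hskb hx1; rwa [mul_assoc] at this ⊢
    have a4 : |(x1-y1)/(ε*sk)| ≤ (2*C)/(ε*sm) := by
      rw [abs_div, abs_of_pos hεsk]
      exact div_le_div₀ (by linarith) huv1 hεsm (mul_le_mul_of_nonneg_left hsmsk hε0.le)
    have b1' := abs_le.mp hb1; have b2' := abs_le.mp a1; have b3' := abs_le.mp a2
    have b4' := abs_le.mp a3; have b5' := abs_le.mp a4
    exact abs_le.mpr ⟨by linarith, by linarith⟩
  -- bounds on u, v
  have hub : |u| ≤ 2*C := by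
    have h1 := abs_le.mp hx1; have h2 := abs_le.mp hx2
    rw [hu]; exact abs_le.mpr ⟨by linarith, by linarith⟩
  have hvb : |v| ≤ 2*C := by
    have h1 := abs_le.mp hy1; have h2 := abs_le.mp hy2
    rw [hv]; exact abs_le.mpr ⟨by linarith, by linarith⟩
  have hW0 : (0:ℝ) ≤ u^2 + v^2 := by positivity
  have hW8 : u^2 + v^2 ≤ 8*C^2 := by
    have h1 := abs_le.mp hub; have h2 := abs_le.mp hvb
    have c1 : (2*C - u)*(2*C + u) ≥ 0 := mul_nonneg (by linarith) (by linarith)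
    have c2 : (2*C - v)*(2*C + v) ≥ 0 := mul_nonneg (by linarith) (by linarith)
    linarith [c1, c2]
  -- bound on Q
  have hq1 : u*(u-v) ≤ (3/2)*(u^2+v^2) := by linarith [sq_nonneg (u+v), sq_nonneg v]
  have hq2 : -((3/2)*(u^2+v^2)) ≤ u*(u-v) := by linarith [sq_nonneg (u-v), sq_nonneg u, sq_nonneg v]
  have hq3 : (u-v)^2 ≤ 2*(u^2+v^2) := by linarith [sq_nonneg (u+v)]
  have hQabs : |Q| ≤ K2*(u^2+v^2) := by
    have e1 : (2*k/ε)*(u*(u-v)) ≤ (2*kmax/ε)*((3/2)*(u^2+v^2)) := by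
      calc (2*k/ε)*(u*(u-v)) ≤ (2*k/ε)*((3/2)*(u^2+v^2)) := mul_le_mul_of_nonneg_left hq1 hcoef0
        _ ≤ (2*kmax/ε)*((3/2)*(u^2+v^2)) := mul_le_mul_of_nonneg_right hcoefM (by positivity)
    have e1' : -((2*kmax/ε)*((3/2)*(u^2+v^2))) ≤ (2*k/ε)*(u*(u-v)) := by
      have a1 : (2*k/ε)*(-((3/2)*(u^2+v^2))) ≤ (2*k/ε)*(u*(u-v)) := mul_le_mul_of_nonneg_left hq2 hcoef0
      have a2 : (2*kmax/ε)*((3/2)*(u^2+v^2)) ≥ (2*k/ε)*((3/2)*(u^2+v^2)) := mul_le_mul_of_nonneg_right hcoefM (by positivity)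
      linarith [a1, a2]
    have e2 : (1/ε^2)*(u-v)^2 ≤ (1/ε^2)*(2*(u^2+v^2)) := mul_le_mul_of_nonneg_left hq3 hi0
    have e2' : 0 ≤ (1/ε^2)*(u-v)^2 := mul_nonneg hi0 (sq_nonneg _)
    rw [hQdef, hK2]
    rw [abs_le]
    constructor
    · linarith [e1', e2', e1, e2]
    · linarith [e1', e2', e1, e2]
  have hK20 : 0 ≤ K2 := by
    rw [hK2]
    have : (0:ℝ) ≤ 2*kmax/ε := div_nonneg (by linarith) hε0.le
    positivity
  have hQ2 : Q^2 ≤ (8*C^2*K2^2)*(u^2+v^2) := by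
    have h1 : Q^2 ≤ (K2*(u^2+v^2))^2 := by
      rw [← sq_abs Q]
      exact pow_le_pow_left₀ (abs_nonneg _) hQabs 2
    linarith [h1, mul_le_mul_of_nonneg_left (mul_le_mul_of_nonneg_left hW8 hW0) (sq_nonneg K2)]
  have hBQ : -(Mb*(K2*(u^2+v^2))) ≤ B*Q := by
    have h1 : |B*Q| ≤ Mb*(K2*(u^2+v^2)) := absmul hBb hQabs
    have := neg_abs_le (B*Q)
    linarith [(abs_le.mp h1).1]
  -- bound on linear part
  have hP2 : P^2 ≤ Mp^2 := by rw [← sq_abs]; exact pow_le_pow_left₀ (abs_nonneg _) hPb 2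
  have hR2 : R^2 ≤ Mr^2 := by rw [← sq_abs]; exact pow_le_pow_left₀ (abs_nonneg _) hRb 2
  have hl : (P*u + R*v)^2 ≤ 2*(Mp^2+Mr^2)*(u^2+v^2) := by
    linarith [sq_nonneg (P*u - R*v), mul_le_mul_of_nonneg_right hP2 (sq_nonneg u),
      mul_le_mul_of_nonneg_right hR2 (sq_nonneg v),
      mul_le_mul_of_nonneg_right hP2 (sq_nonneg v),
      mul_le_mul_of_nonneg_right hR2 (sq_nonneg u),
      mul_nonneg (sq_nonneg Mp) (sq_nonneg v), mul_nonneg (sq_nonneg Mr) (sq_nonneg u)]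
  -- final assembly
  have f1 : (d + (P*u+R*v) + Q)^2 ≥ (1/2)*d^2 - ((P*u+R*v)+Q)^2 := by
    linarith [sq_nonneg (d + 2*((P*u+R*v)+Q))]
  have f2 : ((P*u+R*v)+Q)^2 ≤ 2*(P*u+R*v)^2 + 2*Q^2 := by
    linarith [sq_nonneg ((P*u+R*v) - Q)]
  have final : (d + (P*u+R*v) + Q)^2 + 2*B*Q ≥ (1/2)*d^2 - C₁*(u^2+v^2) := by
    rw [hC₁def]
    linarith [hW0, hl, hQ2, hBQ, f1, f2]
  -- the key algebraic identity
  have key : (b2 + (2*k/ε)*x2*(x2 - y2) + (1/ε^2)*(x2 - y2)^2 - 2*sk*x2 - (x2 - y2)/(ε*sk))^2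
      - B^2 - 2*B*(d + (2*k/ε)*u*(x1-y1) + (2*k/ε)*x1*(u - v)
           + (2/ε^2)*(x1-y1)*(u - v) - 2*sk*u - (u - v)/(ε*sk))
      = (d + (P*u + R*v) + Q)^2 + 2*B*Q := by
    rw [hBdef, hQdef, hPdef, hRdef, hu, hv, hd]
    field_simp
    ring
  linarith [key, final]

/-- Pointwise lower bound (6.8) for the second-order remainder of `L₂²`. -/
theorem pointwise_remainder_bound_L2 (Z ε kmin kmax C : ℝ) (hZ : 0 < Z)
    (hε : ε ∈ Set.Ioo (0:ℝ) 1) (hkmin : 0 < kmin) (hkk : kmin ≤ kmax) (hC : 0 < C) :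
    ∃ C₁ : ℝ, 0 < C₁ ∧
      ∀ k ∈ Set.Icc kmin kmax,
      ∀ q₁ r₁ q₂ r₂ : ℝ → ℝ,
      ContDiff ℝ 2 q₁ → ContDiff ℝ 2 r₁ → ContDiff ℝ 2 q₂ → ContDiff ℝ 2 r₂ →
      (∀ z ∈ Set.Icc (0:ℝ) Z,
        |deriv q₁ z| ≤ C ∧ |deriv r₁ z| ≤ C ∧ |deriv q₂ z| ≤ C ∧ |deriv r₂ z| ≤ C ∧
        |deriv (deriv r₁) z| ≤ C) →
      ∀ h₁ h₂ : ℝ → ℝ,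
      h₁ = (fun z => q₂ z - q₁ z) → h₂ = (fun z => r₂ z - r₁ z) →
      ∀ z ∈ Set.Icc (0:ℝ) Z,
        (L2 ε k q₂ r₂ z) ^ 2 - (L2 ε k q₁ r₁ z) ^ 2
            - 2 * L2 ε k q₁ r₁ z * L2lin ε k q₁ r₁ h₁ h₂ z
          ≥ (1/2) * (deriv (deriv h₂) z) ^ 2
            - C₁ * ((deriv h₁ z) ^ 2 + (deriv h₂ z) ^ 2) := by
  have hε0 : 0 < ε := hε.1
  have hkmax0 : (0:ℝ) ≤ kmax := by linarith
  have hsm0 : 0 < Real.sqrt kmin := Real.sqrt_pos.mpr hkmin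
  have hsM0 : 0 ≤ Real.sqrt kmax := Real.sqrt_nonneg _
  refine ⟨4*(((2*kmax/ε)*(2*C) + (2*kmax/ε)*C + (2/ε^2)*(2*C)
        + 2*Real.sqrt kmax + 1/(ε*Real.sqrt kmin))^2
        + ((2*kmax/ε)*C + (2/ε^2)*(2*C) + 1/(ε*Real.sqrt kmin))^2)
      + 16*C^2*((2*kmax/ε)*(3/2) + 2*(1/ε^2))^2
      + 2*(C + (2*kmax/ε)*(C*(2*C)) + (1/ε^2)*(2*C)^2 + 2*Real.sqrt kmax*C
          + (2*C)/(ε*Real.sqrt kmin))*((2*kmax/ε)*(3/2) + 2*(1/ε^2)) + 1, ?_, ?_⟩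
  · -- positivity of the constant
    have h1 : (0:ℝ) ≤ 2*kmax/ε := div_nonneg (by linarith) hε0.le
    have h2 : (0:ℝ) ≤ 1/ε^2 := by positivity
    have h3 : (0:ℝ) ≤ 2*C/(ε*Real.sqrt kmin) := div_nonneg (by linarith) (mul_pos hε0 hsm0).le
    have hMb0 : (0:ℝ) ≤ C + (2*kmax/ε)*(C*(2*C)) + (1/ε^2)*(2*C)^2 + 2*Real.sqrt kmax*C
          + (2*C)/(ε*Real.sqrt kmin) := by
      have := mul_nonneg h1 (mul_nonneg hC.le (by linarith : (0:ℝ) ≤ 2*C))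
      have := mul_nonneg h2 (sq_nonneg (2*C))
      have := mul_nonneg (mul_nonneg (by norm_num : (0:ℝ) ≤ 2) hsM0) hC.le
      linarith
    have hK20 : (0:ℝ) ≤ (2*kmax/ε)*(3/2) + 2*(1/ε^2) := by
      have := mul_nonneg h1 (by norm_num : (0:ℝ) ≤ (3:ℝ)/2)
      linarith
    have := mul_nonneg hMb0 hK20
    have h4 : (0:ℝ) ≤ 16*C^2*((2*kmax/ε)*(3/2) + 2*(1/ε^2))^2 := by positivity
    nlinarith [sq_nonneg ((2*kmax/ε)*(2*C) + (2*kmax/ε)*C + (2/ε^2)*(2*C)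
        + 2*Real.sqrt kmax + 1/(ε*Real.sqrt kmin)),
      sq_nonneg ((2*kmax/ε)*C + (2/ε^2)*(2*C) + 1/(ε*Real.sqrt kmin))]
  · intro k hk q₁ r₁ q₂ r₂ hq₁ hr₁ hq₂ hr₂ hbnd h₁ h₂ hh₁ hh₂ z hz
    subst hh₁; subst hh₂
    obtain ⟨b1, b2, b3, b4, b5⟩ := hbnd z hz
    have Dq₁ : Differentiable ℝ q₁ := hq₁.differentiable two_ne_zero
    have Dr₁ : Differentiable ℝ r₁ := hr₁.differentiable two_ne_zero
    have Dq₂ : Differentiable ℝ q₂ := hq₂.differentiable two_ne_zero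
    have Dr₂ : Differentiable ℝ r₂ := hr₂.differentiable two_ne_zero
    have Ddr₁ : Differentiable ℝ (deriv r₁) := by
      have h2 : ContDiff ℝ ((1:ℕ∞)+1) r₁ := by exact_mod_cast hr₁
      rw [contDiff_succ_iff_deriv] at h2
      exact h2.2.2.differentiable (by simp)
    have Ddr₂ : Differentiable ℝ (deriv r₂) := by
      have h2 : ContDiff ℝ ((1:ℕ∞)+1) r₂ := by exact_mod_cast hr₂
      rw [contDiff_succ_iff_deriv] at h2
      exact h2.2.2.differentiable (by simp)
    have hd1 : deriv (fun x => q₂ x - q₁ x) z = deriv q₂ z - deriv q₁ z :=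
      deriv_sub (Dq₂ z) (Dq₁ z)
    have hd2 : deriv (fun x => r₂ x - r₁ x) z = deriv r₂ z - deriv r₁ z :=
      deriv_sub (Dr₂ z) (Dr₁ z)
    have hd3 : deriv (deriv (fun x => r₂ x - r₁ x)) z
        = deriv (deriv r₂) z - deriv (deriv r₁) z := by
      have e : (deriv fun x => r₂ x - r₁ x) = fun x => deriv r₂ x - deriv r₁ x :=
        funext fun x => deriv_sub (Dr₂ x) (Dr₁ x)
      rw [e]
      exact deriv_sub (Ddr₂ z) (Ddr₁ z)
    simp only [L2, L2lin, hd1, hd2, hd3]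
    have hk0 : (0:ℝ) ≤ k := by linarith [hk.1]
    have hsk : 0 < Real.sqrt k := Real.sqrt_pos.mpr (lt_of_lt_of_le hkmin hk.1)
    have hsmsk : Real.sqrt kmin ≤ Real.sqrt k := Real.sqrt_le_sqrt hk.1
    have hskM : Real.sqrt k ≤ Real.sqrt kmax := Real.sqrt_le_sqrt hk.2
    have H := aux_alg ε k (Real.sqrt k) (Real.sqrt kmin) (Real.sqrt kmax) kmax C
      (deriv q₁ z) (deriv r₁ z) (deriv q₂ z) (deriv r₂ z)
      (deriv (deriv r₁) z) (deriv (deriv r₂) z) _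
      hε0 hk0 hk.2 hsk hsm0 hsmsk hskM hC b1 b2 b3 b4 b5 rfl
    linarith [H]
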